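/- (Bad rankings can be quadratic) For every n ≥ 2 there exists a set of n unit squares with pairwise distinct centers in ℝ² and a ranking ρ of these squares such that the visibility graph G(ρ) has at least ⌊n/2⌋ · ⌈n/2⌉ edges. -/

import Mathlib

set_option maxHeartbeats 1000000

def UnitSq (c : ℝ × ℝ) : Set (ℝ × ℝ) := Metric.closedBall c 1

def LexLt (a b : ℝ × ℝ) : Prop := a.1 < b.1 ∨ (a.1 = b.1 ∧ a.2 < b.2)

def InRect (p a b : ℝ × ℝ) : Prop :=
  min a.1 b.1 ≤ p.1 ∧ p.1 ≤ max a.1 b.1 ∧ min a.2 b.2 ≤ p.2 ∧ p.2 ≤ max a.2 b.2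

def Sees {n : ℕ} (c : Fin n → ℝ × ℝ) (i k : Fin n) : Prop :=
  ∃ p ∈ UnitSq (c i) ∩ UnitSq (c k), ∀ j : Fin n, i < j → j < k → p ∉ UnitSq (c j)

lemma mem_unitSq {p c : ℝ × ℝ} : p ∈ UnitSq c ↔ |p.1 - c.1| ≤ 1 ∧ |p.2 - c.2| ≤ 1 := by
  simp [UnitSq, Metric.mem_closedBall, Prod.dist_eq, Real.dist_eq, max_le_iff]

/-- Bad rankings can be quadratic: for every `n ≥ 2` there are `n` unit squares
with pairwise distinct centers and a ranking of them with at least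
`⌊n/2⌋ ⋅ ⌈n/2⌉` visibilities. -/
theorem stmt_13 {n : ℕ} (hn : 2 ≤ n) :
    ∃ c : Fin n → ℝ × ℝ, Function.Injective c ∧
      (n / 2) * ((n + 1) / 2) ≤
        {p : Fin n × Fin n | p.1 < p.2 ∧ Sees c p.1 p.2}.ncard := by
  classical
  set m := n / 2 with hm
  have hN2 : (2:ℝ) ≤ (n:ℝ) := by exact_mod_cast hn
  have hNpos : (0:ℝ) < (n:ℝ) := by linarith
  set ε : ℝ := 1 / (n:ℝ) with hε
  have hεpos : 0 < ε := by positivity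
  have hNε : (n:ℝ) * ε = 1 := by rw [hε]; field_simp
  have hcast : ∀ a : ℕ, a ≤ n → (a:ℝ) * ε ≤ 1 := by
    intro a ha
    have : (a:ℝ) ≤ (n:ℝ) := by exact_mod_cast ha
    nlinarith
  have hε1 : ε ≤ 1 := by
    have := hcast 1 (by omega); simpa using this
  set c : Fin n → ℝ × ℝ := fun j =>
    if (j:ℕ) < m then (-((j:ℕ):ℝ) * ε, (m:ℝ) * ε) else (1, (((j:ℕ) - m : ℕ):ℝ) * ε)
    with hc
  have key : ∀ i k : Fin n, (i:ℕ) < m → m ≤ (k:ℕ) → Sees c i k := by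
    intro i k hi hk
    set t : ℕ := (k:ℕ) - m with htdef
    have htm : t ≤ m := by omega
    have hiR : ((i:ℕ):ℝ) + 1 ≤ (m:ℝ) := by exact_mod_cast hi
    have htR : ((t:ℕ):ℝ) ≤ (m:ℝ) := by exact_mod_cast htm
    have hm1 : (m:ℝ) * ε ≤ 1 := hcast m (by omega)
    have ht0 : (0:ℝ) ≤ (t:ℝ) * ε := by positivity
    have htm' : (t:ℝ) * ε ≤ (m:ℝ) * ε := by nlinarith
    have hi0 : (0:ℝ) ≤ ((i:ℕ):ℝ) * ε := by positivity
    have hie : ((i:ℕ):ℝ) * ε + ε ≤ (m:ℝ) * ε := by nlinarith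
    refine ⟨(1 - (((i:ℕ):ℝ) + 1/2) * ε, 1 + (t:ℝ) * ε), ⟨?_, ?_⟩, ?_⟩
    · have hci : c i = (-((i:ℕ):ℝ) * ε, (m:ℝ) * ε) := by simp [hc, hi]
      rw [hci, mem_unitSq]
      constructor <;> rw [abs_le] <;> constructor <;> simp only [] <;> nlinarith
    · have hck : c k = (1, (((k:ℕ) - m : ℕ):ℝ) * ε) := by
        simp [hc, not_lt.mpr hk]
      rw [hck, mem_unitSq, ← htdef]
      constructor <;> rw [abs_le] <;> constructor <;> simp only [] <;> nlinarith
    · intro j hij hjk hmem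
      rw [mem_unitSq] at hmem
      obtain ⟨h1, h2⟩ := hmem
      by_cases hj : (j:ℕ) < m
      · have hcj : c j = (-((j:ℕ):ℝ) * ε, (m:ℝ) * ε) := by simp [hc, hj]
        rw [hcj] at h1
        have hij' : (i:ℕ) < (j:ℕ) := hij
        have : ((i:ℕ):ℝ) + 1 ≤ ((j:ℕ):ℝ) := by exact_mod_cast hij'
        have h1' := le_abs_self (1 - (((i:ℕ):ℝ) + 1/2) * ε - (-((j:ℕ):ℝ) * ε))
        simp only [] at h1
        nlinarith [le_trans h1' h1]
      · have hcj : c j = (1, (((j:ℕ) - m : ℕ):ℝ) * ε) := by simp [hc, hj]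
        rw [hcj] at h2
        have hjk' : (j:ℕ) < (k:ℕ) := hjk
        have hsub : ((j:ℕ) - m : ℕ) + 1 ≤ t := by omega
        have : (((j:ℕ) - m : ℕ):ℝ) + 1 ≤ (t:ℝ) := by exact_mod_cast hsub
        have h2' := le_abs_self (1 + (t:ℝ) * ε - (((j:ℕ) - m : ℕ):ℝ) * ε)
        simp only [] at h2
        nlinarith [le_trans h2' h2]
  refine ⟨c, ?_, ?_⟩
  · intro j1 j2 h
    simp only [hc] at h
    by_cases h1 : (j1:ℕ) < m <;> by_cases h2 : (j2:ℕ) < m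
    · rw [if_pos h1, if_pos h2, Prod.ext_iff] at h
      have : ((j1:ℕ):ℝ) = ((j2:ℕ):ℝ) := by
        have h' := h.1
        simp only [] at h'
        have := mul_right_cancel₀ (ne_of_gt hεpos) h'
        linarith
      have : (j1:ℕ) = (j2:ℕ) := by exact_mod_cast this
      exact Fin.ext this
    · exfalso
      rw [if_pos h1, if_neg h2, Prod.ext_iff] at h
      have h' := h.1
      simp only [] at h'
      have h0 : (0:ℝ) ≤ ((j1:ℕ):ℝ) * ε := by positivity
      nlinarith
    · exfalso
      rw [if_neg h1, if_pos h2, Prod.ext_iff] at h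
      have h' := h.1
      simp only [] at h'
      have h0 : (0:ℝ) ≤ ((j2:ℕ):ℝ) * ε := by positivity
      nlinarith
    · rw [if_neg h1, if_neg h2, Prod.ext_iff] at h
      have : (((j1:ℕ) - m : ℕ):ℝ) = (((j2:ℕ) - m : ℕ):ℝ) := by
        have h' := h.2
        simp only [] at h'
        exact mul_right_cancel₀ (ne_of_gt hεpos) h'
      have heq : ((j1:ℕ) - m : ℕ) = ((j2:ℕ) - m : ℕ) := by exact_mod_cast this
      have : (j1:ℕ) = (j2:ℕ) := by omega
      exact Fin.ext this
  · have hm2 : 0 < n - m := by omega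
    set g : Fin m × Fin (n - m) → Fin n × Fin n := fun q =>
      (⟨q.1, by have := q.1.isLt; omega⟩, ⟨m + q.2, by have := q.2.isLt; omega⟩) with hg
    have hginj : Function.Injective g := by
      intro a b hab
      simp only [hg, Prod.ext_iff, Fin.mk.injEq] at hab
      obtain ⟨ha, hb⟩ := hab
      exact Prod.ext (Fin.ext ha) (Fin.ext (by omega))
    have hsub : Set.range g ⊆ {p : Fin n × Fin n | p.1 < p.2 ∧ Sees c p.1 p.2} := by
      rintro x ⟨⟨a, b⟩, rfl⟩
      constructor
      · show (a:ℕ) < m + (b:ℕ)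
        have := a.isLt; omega
      · exact key _ _ a.isLt (by show m ≤ m + (b:ℕ); omega)
    have hcard : (Set.range g).ncard = m * (n - m) := by
      have := Nat.card_range_of_injective hginj
      rw [Set.ncard_eq_toFinset_card', Set.toFinset_card]
      rw [Nat.card_eq_fintype_card] at this
      rw [this]
      simp
    have hle := Set.ncard_le_ncard hsub (Set.toFinite _)
    rw [hcard] at hle
    have heq : n / 2 * ((n + 1) / 2) = m * (n - m) := by
      have h' : (n + 1) / 2 = n - m := by omega
      rw [h', hm]
    rw [heq]
    exact hle
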